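/- Let G be transitive on Ω with G-invariant partitions B (blocks of prime cardinality p, orbits of semiregular ρ) and C (C ⪯ the partition into ρ-orbit unions), where the blocks of C are the orbits of some ⟨ρ_j⟩ with ρ_j semiregular. If C ≠ B and for every y the block C_y meets each block of B in at most one point, then every z ∈ C_y satisfies y ≡_B z; that is, the equivalence classes of ≡_B refine-wise contain the blocks of C (X ⪰ C). -/

import Mathlib

/-- With the chain relation ≡_B as before, if C is a further G-invariant
partition (blocks the orbits of a semiregular ρⱼ ∈ G), C ≠ B, and each block
of C meets each block of B in at most one point, then every block of C is
contained in a single equivalence class of ≡_B (X ⪰ C). -/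
theorem stmt_10 {Ω : Type*} (G : Subgroup (Equiv.Perm Ω))
    (htrans : ∀ x y : Ω, ∃ g ∈ G, g x = y)
    (B : Set (Set Ω)) (hB : Setoid.IsPartition B)
    (hinv : ∀ b ∈ B, ∀ g ∈ G, (⇑g) '' b ∈ B)
    (p : ℕ) (hp : p.Prime)
    (ρ : Equiv.Perm Ω) (hρG : ρ ∈ G)
    (hρorb : ∀ b ∈ B, ∃ z : Ω, b = {x : Ω | ∃ j : ℤ, x = (ρ ^ j) z})
    (hcard : ∀ b ∈ B, Nat.card b = p)
    (C : Set (Set Ω)) (hC : Setoid.IsPartition C)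
    (hCinv : ∀ c ∈ C, ∀ g ∈ G, (⇑g) '' c ∈ C)
    (ρj : Equiv.Perm Ω) (hρjG : ρj ∈ G)
    (hρjsemi : ∀ (m : ℤ) (x : Ω), (ρj ^ m) x = x → ρj ^ m = 1)
    (hCorb : ∀ c ∈ C, ∃ z : Ω, c = {x : Ω | ∃ j : ℤ, x = (ρj ^ j) z})
    (hCB : C ≠ B)
    (hmeet : ∀ c ∈ C, ∀ b ∈ B, ∀ y ∈ c ∩ b, ∀ z ∈ c ∩ b, y = z)
    (r : Ω → Ω → Prop)
    (hr : ∀ y z : Ω, r y z ↔ ∃ (n : ℕ) (c : ℕ → Ω), c 0 = y ∧ c n = z ∧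
      ∀ i < n, ∀ b ∈ B, c (i + 1) ∈ b →
        ¬ ∃ w : Ω, b ⊆ {u : Ω | ∃ g ∈ G, g (c i) = c i ∧ g w = u}) :
    ∀ c ∈ C, ∀ y ∈ c, ∀ z ∈ c, r y z := by
  intro c hc y hy z hz
  rw [hr]
  refine ⟨1, fun i => if i = 0 then y else z, by simp, by simp, ?_⟩
  intro i hi b hb hzb
  interval_cases i
  rintro ⟨w, hw⟩
  norm_num at hzb hw
  -- b has at least two points
  have hbp : Nat.card b = p := hcard b hb
  have h2 : ∃ z' ∈ b, z' ≠ z := by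
    by_contra hcon
    push_neg at hcon
    have hbz : b = {z} := Set.eq_singleton_iff_unique_mem.mpr ⟨hzb, hcon⟩
    rw [hbz] at hbp
    simp [Nat.card_coe_set_eq] at hbp
    exact hp.one_lt.ne' hbp.symm
  obtain ⟨z', hz'b, hz'z⟩ := h2
  obtain ⟨g, hgG, hgy, hgw⟩ := hw hzb
  obtain ⟨g', hg'G, hg'y, hg'w⟩ := hw hz'b
  set h : Equiv.Perm Ω := g' * g⁻¹ with hh
  have hhG : h ∈ G := G.mul_mem hg'G (G.inv_mem hgG)
  have hhy : h y = y := by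
    have : g⁻¹ y = y := by
      conv_lhs => rw [← hgy]
      simp
    rw [hh, Equiv.Perm.mul_apply, this, hg'y]
  have hhz : h z = z' := by
    have : g⁻¹ z = w := by
      conv_lhs => rw [← hgw]
      simp
    rw [hh, Equiv.Perm.mul_apply, this, hg'w]
  -- h fixes c setwise
  have hhc : (⇑h) '' c = c := by
    have h1 : (⇑h) '' c ∈ C := hCinv c hc h hhG
    have hyin : y ∈ (⇑h) '' c := ⟨y, hy, hhy⟩
    obtain ⟨c', ⟨hc'C, hyc'⟩, huniq⟩ := hC.2 y
    have e1 := huniq ((⇑h) '' c) ⟨h1, hyin⟩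
    have e2 := huniq c ⟨hc, hy⟩
    rw [e1, e2]
  have hz'c : z' ∈ c := by
    rw [← hhc]
    exact ⟨z, hz, hhz⟩
  exact hz'z (hmeet c hc b hb z' ⟨hz'c, hz'b⟩ z ⟨hz, hzb⟩)
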